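/- (Christoffel–Darboux formula.) Suppose p_0, p_1, p_2, … are real polynomials and (a_j)_{j≥1}, (b_j)_{j≥1}, (c_j)_{j≥2} are reals with a_j ≠ 0 for all j ≥ 1, satisfying p_1 = (a_1 X + b_1)·p_0 and, for every j ≥ 2, p_j = (a_j X + b_j)·p_{j−1} − c_j·p_{j−2} with c_j = a_j / a_{j−1}. Then for every n ≥ 1 and all reals x ≠ y: Σ_{i=0}^{n−1} p_i(x)·p_i(y) = (1/a_n) · (p_n(x)·p_{n−1}(y) − p_{n−1}(x)·p_n(y)) / (x − y). -/
import Mathlib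


/-- Christoffel–Darboux formula, from the three-term recurrence alone. -/
theorem stmt_7 (p : ℕ → Polynomial ℝ) (a b c : ℕ → ℝ)
    (ha : ∀ j, 1 ≤ j → a j ≠ 0)
    (h1 : p 1 = (Polynomial.C (a 1) * Polynomial.X + Polynomial.C (b 1)) * p 0)
    (hrec : ∀ j, 2 ≤ j →
      p j = (Polynomial.C (a j) * Polynomial.X + Polynomial.C (b j)) * p (j - 1) -
        Polynomial.C (c j) * p (j - 2))
    (hc : ∀ j, 2 ≤ j → c j = a j / a (j - 1))
    (n : ℕ) (hn : 1 ≤ n) (x y : ℝ) (hxy : x ≠ y) :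
    ∑ i ∈ Finset.range n, (p i).eval x * (p i).eval y =
      1 / a n *
        (((p n).eval x * (p (n - 1)).eval y - (p (n - 1)).eval x * (p n).eval y) / (x - y)) := by
  have hxy' : x - y ≠ 0 := sub_ne_zero.mpr hxy
  induction n, hn using Nat.le_induction with
  | base =>
    have h0 := ha 1 le_rfl
    simp only [Finset.sum_range_one, h1, Polynomial.eval_mul, Polynomial.eval_add,
      Polynomial.eval_C, Polynomial.eval_X]
    field_simp
    ring
  | succ n hn ih =>
    rw [Finset.sum_range_succ, ih]
    have hrn := hrec (n+1) (by omega)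
    have hcn := hc (n+1) (by omega)
    have han := ha n hn
    have han1 := ha (n+1) (by omega)
    have hx := congrArg (Polynomial.eval x) hrn
    have hy := congrArg (Polynomial.eval y) hrn
    simp only [Polynomial.eval_mul, Polynomial.eval_add, Polynomial.eval_sub,
      Polynomial.eval_C, Polynomial.eval_X, Nat.add_sub_cancel] at hx hy hcn
    have h2 : n + 1 - 2 = n - 1 := by omega
    rw [h2] at hx hy
    rw [Nat.add_sub_cancel, hx, hy, hcn]
    field_simp
    ring
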